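/- If x = (x_0, …, x_n) ∈ ℂ^{n+1} is a nonzero vector satisfying x_0^k + x_1^k + x_2^k = 0 and λ_i x_0^k + x_1^k + x_{i+2}^k = 0 for i = 1, …, n−2, then at most one of the coordinates x_0, …, x_n is zero. In particular, the fixed point sets in S of the automorphisms φ_0, …, φ_n are pairwise disjoint. -/

import Mathlib

open Fin.NatCast in
/-- A nonzero vector `x ∈ ℂ^{n+1}` satisfies the defining equations of the generalized
Fermat curve of type `(k,n)`: `lam i * x₀^k + x₁^k + x_{i+2}^k = 0` for `0 ≤ i ≤ n - 2`
(with `lam 0 = 1`). -/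
def fermatEqns (n k : ℕ) (lam : ℕ → ℂ) (x : Fin (n + 1) → ℂ) : Prop :=
  ∀ i : ℕ, i ≤ n - 2 → lam i * x 0 ^ k + x 1 ^ k + x ((i + 2 : ℕ) : Fin (n + 1)) ^ k = 0

open Fin.NatCast in
/-- a nonzero solution of the defining equations of the generalized Fermat
curve `S` of type `(k,n)` has at most one vanishing coordinate; in particular the fixed
point sets in `S` of the automorphisms `φ₀, …, φₙ` are pairwise disjoint. -/
theorem stmt_10 (k n : ℕ) (hk : 2 ≤ k) (hn : 2 ≤ n)
    (lam : ℕ → ℂ) (hlam0 : lam 0 = 1)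
    (hlam_ne0 : ∀ i, 1 ≤ i → i ≤ n - 2 → lam i ≠ 0)
    (hlam_ne1 : ∀ i, 1 ≤ i → i ≤ n - 2 → lam i ≠ 1)
    (hlam_inj : ∀ i j, i ≤ n - 2 → j ≤ n - 2 → lam i = lam j → i = j) :
    (∀ x : Fin (n + 1) → ℂ, x ≠ 0 → fermatEqns n k lam x →
      {j : Fin (n + 1) | x j = 0}.Subsingleton) ∧
    (∀ j j' : Fin (n + 1), j ≠ j' →
      {p : Projectivization ℂ (Fin (n + 1) → ℂ) |
          fermatEqns n k lam p.rep ∧ p.rep j = 0} ∩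
        {p : Projectivization ℂ (Fin (n + 1) → ℂ) |
          fermatEqns n k lam p.rep ∧ p.rep j' = 0} = ∅) := by
  have hk0 : k ≠ 0 := by omega
  have hlamne : ∀ i, i ≤ n - 2 → lam i ≠ 0 := by
    intro i hi
    rcases Nat.eq_zero_or_pos i with h | h
    · rw [h, hlam0]; exact one_ne_zero
    · exact hlam_ne0 i h hi
  have hcast : ∀ i : ℕ, i ≤ n - 2 → (((i + 2 : ℕ) : Fin (n + 1)) : ℕ) = i + 2 := by
    intro i hi
    exact Fin.val_cast_of_lt (by omega)
  have key : ∀ x : Fin (n + 1) → ℂ, x ≠ 0 → fermatEqns n k lam x →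
      {j : Fin (n + 1) | x j = 0}.Subsingleton := by
    intro x hx heq
    intro j hj j' hj'
    simp only [Set.mem_setOf_eq] at hj hj'
    by_contra hne
    -- for indices ≥ 2: the third term of the equation is `x m ^ k`
    have hidx : ∀ m : Fin (n + 1), 2 ≤ (m : ℕ) →
        ((((m : ℕ) - 2 + 2 : ℕ) : Fin (n + 1)) = m) ∧ ((m : ℕ) - 2 ≤ n - 2) := by
      intro m hm
      have hle : (m : ℕ) - 2 ≤ n - 2 := by have := m.isLt; omega
      constructor
      · apply Fin.ext
        rw [hcast _ hle]
        omega
      · exact hle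
    have hone : ∀ m : Fin (n + 1), (m : ℕ) = 1 → m = 1 := by
      intro m hm1
      have h := Fin.cast_val_eq_self m
      rw [hm1] at h
      rw [← h, Nat.cast_one]
    -- if x 0 = 0 and x 1 = 0 then x = 0
    have hzero : x 0 = 0 → x 1 = 0 → False := by
      intro h0 h1
      apply hx
      funext m
      show x m = 0
      by_cases hm0 : (m : ℕ) = 0
      · have : m = 0 := Fin.ext (by simpa using hm0)
        rw [this]; exact h0
      by_cases hm1 : (m : ℕ) = 1
      · rw [hone m hm1]; exact h1
      · have hm : 2 ≤ (m : ℕ) := by omega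
        obtain ⟨hmeq, hmle⟩ := hidx m hm
        have := heq ((m : ℕ) - 2) hmle
        rw [hmeq] at this
        simp only [h0, h1, zero_pow hk0, mul_zero, zero_add] at this
        simpa [pow_eq_zero_iff hk0] using this
    -- main claim: two distinct vanishing coordinates force x 0 = x 1 = 0
    have pair : ∀ a b : Fin (n + 1), x a = 0 → x b = 0 → (a : ℕ) < (b : ℕ) → False := by
      intro a b ha hb hab
      by_cases ha0 : (a : ℕ) = 0
      · have haa : a = 0 := Fin.ext (by simpa using ha0)
        rw [haa] at ha
        by_cases hb1 : (b : ℕ) = 1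
        · rw [hone b hb1] at hb
          exact hzero ha hb
        · have hbge : 2 ≤ (b : ℕ) := by omega
          obtain ⟨hbeq, hble⟩ := hidx b hbge
          have e := heq ((b : ℕ) - 2) hble
          rw [hbeq] at e
          simp only [ha, hb, zero_pow hk0, mul_zero, zero_add, add_zero] at e
          exact hzero ha ((pow_eq_zero_iff hk0).mp e)
      by_cases ha1 : (a : ℕ) = 1
      · have haa : a = 1 := hone a ha1
        rw [haa] at ha
        have hbge : 2 ≤ (b : ℕ) := by omega
        obtain ⟨hbeq, hble⟩ := hidx b hbge
        have e := heq ((b : ℕ) - 2) hble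
        rw [hbeq] at e
        simp only [ha, hb, zero_pow hk0, add_zero] at e
        have h0 : x 0 = 0 := by
          have := mul_eq_zero.mp e
          rcases this with h | h
          · exact absurd h (hlamne _ hble)
          · exact (pow_eq_zero_iff hk0).mp h
        exact hzero h0 ha
      · have hage : 2 ≤ (a : ℕ) := by omega
        have hbge : 2 ≤ (b : ℕ) := by omega
        obtain ⟨haeq, hale⟩ := hidx a hage
        obtain ⟨hbeq, hble⟩ := hidx b hbge
        have ea := heq ((a : ℕ) - 2) hale
        have eb := heq ((b : ℕ) - 2) hble
        rw [haeq, ha, zero_pow hk0, add_zero] at ea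
        rw [hbeq, hb, zero_pow hk0, add_zero] at eb
        have hlamd : lam ((a : ℕ) - 2) ≠ lam ((b : ℕ) - 2) := by
          intro h
          have := hlam_inj _ _ hale hble h
          omega
        have h0 : x 0 = 0 := by
          have e : (lam ((a : ℕ) - 2) - lam ((b : ℕ) - 2)) * x 0 ^ k = 0 := by
            have := sub_eq_zero.mpr (ea.trans eb.symm)
            ring_nf at this ⊢
            linear_combination this
          rcases mul_eq_zero.mp e with h | h
          · exact absurd (sub_eq_zero.mp h) hlamd
          · exact (pow_eq_zero_iff hk0).mp h
        have h1 : x 1 = 0 := by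
          rw [h0, zero_pow hk0, mul_zero, zero_add] at ea
          exact (pow_eq_zero_iff hk0).mp ea
        exact hzero h0 h1
      -- finish subsingleton
    have hvne : (j : ℕ) ≠ (j' : ℕ) := fun h => hne (Fin.ext h)
    rcases lt_or_gt_of_ne hvne with h | h
    · exact pair j j' hj hj' h
    · exact pair j' j hj' hj h
  refine ⟨key, ?_⟩
  intro j j' hne
  ext p
  simp only [Set.mem_inter_iff, Set.mem_setOf_eq, Set.mem_empty_iff_false, iff_false]
  rintro ⟨⟨heq, hj⟩, ⟨_, hj'⟩⟩
  exact hne (key p.rep (Projectivization.rep_nonzero p) heq hj hj')
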